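/- Let q be even and K a maximal {k,d}-arc in PG(2,q) embedded as the hyperplane at infinity H_∞ of PG(3,q). Define T_2*(K): points are the affine points of PG(3,q)\H_∞; lines are the lines of PG(3,q) not in H_∞ meeting H_∞ in a point of K; incidence is inherited. Then T_2*(K) is a partial geometry with parameters s = q-1, t = k-1 = (d-1)(q+1), and α = d-1. -/

import Mathlib

open scoped LinearAlgebra.Projectivization
open Projectivization

section AuxLines
variable {F : Type*} [Field F]

private lemma line_reparam (p v : Fin 3 → F) {x : Fin 3 → F}
    (hx : ∃ c : F, x = p + c • v) :
    {y : Fin 3 → F | ∃ c : F, y = p + c • v} = {y | ∃ c : F, y = x + c • v} := by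
  obtain ⟨c₀, rfl⟩ := hx
  ext y
  constructor
  · rintro ⟨c, rfl⟩; exact ⟨c - c₀, by rw [sub_smul]; abel⟩
  · rintro ⟨c, rfl⟩; exact ⟨c₀ + c, by rw [add_smul]; abel⟩

private lemma line_scale (x v : Fin 3 → F) {a : F} (ha : a ≠ 0) :
    {y : Fin 3 → F | ∃ c : F, y = x + c • (a • v)} = {y | ∃ c : F, y = x + c • v} := by
  ext y
  constructor
  · rintro ⟨c, rfl⟩; exact ⟨c * a, by rw [mul_smul]⟩
  · rintro ⟨c, rfl⟩
    exact ⟨c * a⁻¹, by rw [smul_smul, mul_assoc, inv_mul_cancel₀ ha, mul_one]⟩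

private lemma line_through (p v : Fin 3 → F) {x y : Fin 3 → F}
    (hx : ∃ c : F, x = p + c • v) (hy : ∃ c : F, y = p + c • v) (hxy : x ≠ y) :
    {z : Fin 3 → F | ∃ c : F, z = p + c • v} = {z | ∃ c : F, z = x + c • (y - x)} := by
  obtain ⟨c₁, hx1⟩ := hx
  obtain ⟨c₂, hy1⟩ := hy
  have hyx : y - x = (c₂ - c₁) • v := by rw [hx1, hy1, sub_smul]; abel
  have hne : c₂ - c₁ ≠ 0 := by
    intro h
    rw [h, zero_smul, sub_eq_zero] at hyx
    exact hxy hyx.symm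
  rw [line_reparam p v ⟨c₁, hx1⟩, ← line_scale x v hne, ← hyx]

private lemma line_ncard [Fintype F] (p : Fin 3 → F) {v : Fin 3 → F} (hv : v ≠ 0) :
    {y : Fin 3 → F | ∃ c : F, y = p + c • v}.ncard = Fintype.card F := by
  have hr : {y : Fin 3 → F | ∃ c : F, y = p + c • v} =
      Set.range (fun c : F => p + c • v) := by
    ext y; simp [eq_comm]
  have hinj : Function.Injective (fun c : F => p + c • v) := by
    intro a b hab
    exact smul_left_injective F hv (by simpa using hab)
  rw [hr, ← Nat.card_coe_set_eq, Nat.card_range_of_injective hinj,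
    Nat.card_eq_fintype_card]

/-- The direction of the segment between two points of a line with direction `v`
is (projectively) `v`. -/
private lemma mk_dir {p v x y : Fin 3 → F} {c₁ c₂ : F} (hv : v ≠ 0) (hx : x = p + c₁ • v)
    (hy : y = p + c₂ • v) (hne : y - x ≠ 0) :
    Projectivization.mk F (y - x) hne = Projectivization.mk F v hv := by
  have hyx : y - x = (c₂ - c₁) • v := by rw [hx, hy, sub_smul]; abel
  exact (Projectivization.mk_eq_mk_iff' F (y - x) v hne hv).2 ⟨c₂ - c₁, hyx.symm⟩

end AuxLines

/-- A family `L` of subsets ("lines") of a point set `X` is a partial geometry with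
parameters `s`, `t`, `α`: every line has `s+1` points, every point is on `t+1` lines,
two distinct points are on at most one common line, two distinct lines meet in at most
one point, and for every anti-flag `(x, ℓ)` there are exactly `α` pairs `(y, M)` with
`x ∈ M`, `y ∈ M`, `y ∈ ℓ`. -/
def IsPartialGeometryLines {X : Type*} (L : Set (Set X)) (s t a : ℕ) : Prop :=
  (∀ ℓ ∈ L, ℓ.ncard = s + 1) ∧
  (∀ x : X, {ℓ ∈ L | x ∈ ℓ}.ncard = t + 1) ∧
  (∀ x y : X, x ≠ y → {ℓ ∈ L | x ∈ ℓ ∧ y ∈ ℓ}.ncard ≤ 1) ∧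
  (∀ ℓ ∈ L, ∀ m ∈ L, ℓ ≠ m → (ℓ ∩ m).ncard ≤ 1) ∧
  (∀ (x : X), ∀ ℓ ∈ L, x ∉ ℓ →
    ({p : X × Set X | p.2 ∈ L ∧ x ∈ p.2 ∧ p.1 ∈ p.2 ∧ p.1 ∈ ℓ}).ncard = a)

/-- Let `q` be even and `K` a maximal `{k,d}`-arc in the plane at infinity `PG(2,q)` of
`PG(3,q)` (directions are points of `ℙ F F³`; every line of the plane at infinity meets
`K` in `0` or `d` points and `|K| = dq - q + d`).  The incidence structure `T₂*(K)`,
whose points are the affine points of `AG(3,q)` and whose lines are the affine lines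
with direction in `K`, is a partial geometry with parameters `s = q-1`,
`t = k - 1 = (d-1)(q+1)` and `α = d-1`. -/
theorem stmt15 (F : Type*) [Field F] [Fintype F] (hq : Even (Fintype.card F))
    (d : ℕ) (hd : 1 ≤ d) (K : Finset (ℙ F (Fin 3 → F)))
    (hcard : K.card = d * Fintype.card F - Fintype.card F + d)
    (harc : ∀ W : Submodule F (Fin 3 → F), Module.finrank F W = 2 →
      ({k : ℙ F (Fin 3 → F) | k ∈ K ∧ k.submodule ≤ W}).ncard = 0 ∨
      ({k : ℙ F (Fin 3 → F) | k ∈ K ∧ k.submodule ≤ W}).ncard = d) :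
    IsPartialGeometryLines
      {ℓ : Set (Fin 3 → F) | ∃ p : Fin 3 → F, ∃ k ∈ K,
        ℓ = {x | ∃ c : F, x = p + c • k.rep}}
      (Fintype.card F - 1) ((d - 1) * (Fintype.card F + 1)) (d - 1) := by
  classical
  haveI : Finite (ℙ F (Fin 3 → F)) := Quotient.finite _
  have hq1 : 1 ≤ Fintype.card F := Fintype.card_pos
  refine ⟨?_, ?_, ?_, ?_, ?_⟩
  · -- each line has q points
    rintro ℓ ⟨p, k, hk, rfl⟩
    rw [line_ncard p k.rep_nonzero]
    omega
  · -- each point is on |K| lines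
    intro x
    have himg : {ℓ ∈ {ℓ : Set (Fin 3 → F) | ∃ p : Fin 3 → F, ∃ k ∈ K,
          ℓ = {y | ∃ c : F, y = p + c • k.rep}} | x ∈ ℓ} =
        (fun k : ℙ F (Fin 3 → F) => {y | ∃ c : F, y = x + c • k.rep}) '' (K : Set _) := by
      ext ℓ
      constructor
      · rintro ⟨⟨p, k, hk, rfl⟩, hx⟩
        exact ⟨k, hk, (line_reparam p _ hx).symm⟩
      · rintro ⟨k, hk, rfl⟩
        exact ⟨⟨x, k, hk, rfl⟩, ⟨0, by simp⟩⟩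
    have hinj : Set.InjOn (fun k : ℙ F (Fin 3 → F) =>
        {y | ∃ c : F, y = x + c • k.rep}) (K : Set _) := by
      intro k _ k' _ h
      replace h : {y : Fin 3 → F | ∃ c : F, y = x + c • k.rep} =
          {y | ∃ c : F, y = x + c • k'.rep} := h
      have h1 : x + k'.rep ∈ {y : Fin 3 → F | ∃ c : F, y = x + c • k.rep} := by
        rw [h]; exact ⟨1, by rw [one_smul]⟩
      obtain ⟨c, hc⟩ := h1
      have hrep : c • k.rep = k'.rep := (add_left_cancel hc).symm
      have h2 : Projectivization.mk F k'.rep k'.rep_nonzero =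
          Projectivization.mk F k.rep k.rep_nonzero :=
        (Projectivization.mk_eq_mk_iff' F _ _ _ _).2 ⟨c, hrep⟩
      rw [Projectivization.mk_rep, Projectivization.mk_rep] at h2
      exact h2.symm
    rw [himg, Set.ncard_image_of_injOn hinj, Set.ncard_coe_finset, hcard]
    obtain ⟨e, rfl⟩ := Nat.exists_eq_add_of_le hd
    have h1 : (1 + e) * Fintype.card F - Fintype.card F = e * Fintype.card F := by
      rw [Nat.add_mul, one_mul, Nat.add_sub_cancel_left]
    rw [h1, Nat.add_sub_cancel_left]
    ring
  · -- two points are on at most one common line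
    intro x y hxy
    rw [Set.ncard_le_one_iff]
    rintro ℓ m ⟨⟨p, k, hk, rfl⟩, hx, hy⟩ ⟨⟨p', k', hk', rfl⟩, hx', hy'⟩
    rw [line_through p _ hx hy hxy, line_through p' _ hx' hy' hxy]
  · -- two lines meet in at most one point
    rintro ℓ ⟨p, k, hk, rfl⟩ m ⟨p', k', hk', rfl⟩ hne
    rw [Set.ncard_le_one_iff]
    rintro a b ⟨ha1, ha2⟩ ⟨hb1, hb2⟩
    by_contra hab
    exact hne (by rw [line_through p _ ha1 hb1 hab, line_through p' _ ha2 hb2 hab])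
  · -- the anti-flag condition
    rintro x ℓ ⟨p, k, hk, rfl⟩ hxℓ
    have hv0 : k.rep ≠ 0 := k.rep_nonzero
    set w : Fin 3 → F := p - x with hw
    have hwv : ∀ a : F, a • k.rep ≠ w := by
      intro a h
      exact hxℓ ⟨-a, by rw [neg_smul, h, hw]; abel⟩
    have li : LinearIndependent F ![k.rep, w] := (LinearIndependent.pair_iff' hv0).2 hwv
    have li' := LinearIndependent.pair_iff.1 li
    have hvW : k.rep ∈ Submodule.span F {k.rep, w} :=
      Submodule.subset_span (Set.mem_insert _ _)
    have hwW : w ∈ Submodule.span F {k.rep, w} :=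
      Submodule.subset_span (Set.mem_insert_of_mem _ rfl)
    have hfr : Module.finrank F (Submodule.span F {k.rep, w}) = 2 := by
      have hrange : Set.range ![k.rep, w] = {k.rep, w} := by
        simp [Matrix.range_cons, Matrix.range_empty, Set.pair_comm]
      rw [← hrange, finrank_span_eq_card li, Fintype.card_fin]
    have hkKW : k ∈ {k' : ℙ F (Fin 3 → F) | k' ∈ K ∧
        k'.submodule ≤ Submodule.span F {k.rep, w}} := by
      refine ⟨hk, ?_⟩
      rw [Projectivization.submodule_eq, Submodule.span_singleton_le_iff_mem]
      exact hvW
    have hKWd : {k' : ℙ F (Fin 3 → F) | k' ∈ K ∧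
        k'.submodule ≤ Submodule.span F {k.rep, w}}.ncard = d := by
      rcases harc (Submodule.span F {k.rep, w}) hfr with h | h
      · exfalso
        rw [Set.ncard_eq_zero (Set.toFinite _)] at h
        exact absurd (h ▸ hkKW) (Set.notMem_empty k)
      · exact h
    -- the set of points of ℓ whose joining line with x is a line of the geometry
    set A : Set (Fin 3 → F) := {y | ∃ (c : F) (hne : y - x ≠ 0),
      y = p + c • k.rep ∧ Projectivization.mk F (y - x) hne ∈ K} with hA
    -- the pair set is the image of A
    have hT : {q : (Fin 3 → F) × Set (Fin 3 → F) |
          q.2 ∈ {ℓ : Set (Fin 3 → F) | ∃ p : Fin 3 → F, ∃ k ∈ K,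
            ℓ = {y | ∃ c : F, y = p + c • k.rep}} ∧ x ∈ q.2 ∧ q.1 ∈ q.2 ∧
            q.1 ∈ {y : Fin 3 → F | ∃ c : F, y = p + c • k.rep}} =
        (fun y => (y, {z | ∃ c : F, z = x + c • (y - x)})) '' A := by
      ext ⟨y, M⟩
      constructor
      · rintro ⟨⟨p', k', hk', rfl⟩, hxM, hyM, hyℓ⟩
        have hxy : x ≠ y := fun h => hxℓ (h ▸ hyℓ)
        have hyx0 : y - x ≠ 0 := sub_ne_zero.2 hxy.symm
        obtain ⟨c₁, hc₁⟩ := hxM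
        obtain ⟨c₂, hc₂⟩ := hyM
        have hmk : Projectivization.mk F (y - x) hyx0 = k' := by
          rw [mk_dir k'.rep_nonzero hc₁ hc₂ hyx0, Projectivization.mk_rep]
        obtain ⟨c, hc⟩ := hyℓ
        refine ⟨y, ⟨c, hyx0, hc, by rw [hmk]; exact hk'⟩, ?_⟩
        have hMeq : {z : Fin 3 → F | ∃ c : F, z = p' + c • k'.rep} =
            {z | ∃ c : F, z = x + c • (y - x)} :=
          line_through p' k'.rep ⟨c₁, hc₁⟩ ⟨c₂, hc₂⟩ hxy
        exact congrArg (Prod.mk y) hMeq.symm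
      · rintro ⟨y', hy', heq⟩
        obtain ⟨c, hne, hyc, hmk⟩ := hy'
        injection heq with h1 h2
        subst h1
        subst h2
        obtain ⟨a, ha⟩ := Projectivization.exists_smul_eq_mk_rep F (y' - x) hne
        refine ⟨⟨x, Projectivization.mk F (y' - x) hne, hmk, ?_⟩, ⟨0, by simp⟩,
          ⟨1, by rw [one_smul]; abel⟩, ⟨c, hyc⟩⟩
        rw [← ha, Units.smul_def, line_scale x (y' - x) a.ne_zero]
    -- A maps bijectively to KW \ {k}
    set h : (Fin 3 → F) → ℙ F (Fin 3 → F) := fun y =>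
      if hy : y - x ≠ 0 then Projectivization.mk F (y - x) hy else k with hhdef
    have hAimg : h '' A = {k' : ℙ F (Fin 3 → F) | k' ∈ K ∧
        k'.submodule ≤ Submodule.span F {k.rep, w}} \ {k} := by
      ext k'
      constructor
      · rintro ⟨y, ⟨c, hne, hyc, hmk⟩, rfl⟩
        have hval : h y = Projectivization.mk F (y - x) hne := by
          rw [hhdef]; exact dif_pos hne
        rw [hval]
        have hyxw : y - x = w + c • k.rep := by rw [hyc, hw]; abel
        refine ⟨⟨hmk, ?_⟩, ?_⟩
        · rw [Projectivization.submodule_mk, Submodule.span_singleton_le_iff_mem, hyxw]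
          exact Submodule.add_mem _ hwW (Submodule.smul_mem _ c hvW)
        · intro hkk
          rw [Set.mem_singleton_iff] at hkk
          rw [← Projectivization.mk_rep k] at hkk
          obtain ⟨a, ha⟩ := (Projectivization.mk_eq_mk_iff' F _ _ hne k.rep_nonzero).1 hkk
          refine hwv (a - c) ?_
          rw [sub_smul, ha, hyxw]
          abel
      · rintro ⟨⟨hk'K, hk'W⟩, hk'ne⟩
        rw [Set.mem_singleton_iff] at hk'ne
        have hrepW : k'.rep ∈ Submodule.span F {k.rep, w} := by
          refine hk'W ?_
          rw [Projectivization.submodule_eq]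
          exact Submodule.mem_span_singleton_self _
        obtain ⟨a, b, hab⟩ := Submodule.mem_span_pair.1 hrepW
        have hb : b ≠ 0 := by
          rintro rfl
          rw [zero_smul, add_zero] at hab
          apply hk'ne
          have h2 : Projectivization.mk F k'.rep k'.rep_nonzero =
              Projectivization.mk F k.rep k.rep_nonzero :=
            (Projectivization.mk_eq_mk_iff' F _ _ _ _).2 ⟨a, hab⟩
          rwa [Projectivization.mk_rep, Projectivization.mk_rep] at h2
        have key : p + (b⁻¹ * a) • k.rep - x = b⁻¹ • k'.rep := by
          rw [← hab, smul_add, smul_smul, smul_smul, inv_mul_cancel₀ hb, one_smul, hw]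
          abel
        have hne : p + (b⁻¹ * a) • k.rep - x ≠ 0 := by
          rw [key]
          exact smul_ne_zero (inv_ne_zero hb) k'.rep_nonzero
        have hmk : Projectivization.mk F (p + (b⁻¹ * a) • k.rep - x) hne = k' := by
          have h2 : Projectivization.mk F (p + (b⁻¹ * a) • k.rep - x) hne =
              Projectivization.mk F k'.rep k'.rep_nonzero :=
            (Projectivization.mk_eq_mk_iff' F _ _ _ _).2 ⟨b⁻¹, key.symm⟩
          rw [h2, Projectivization.mk_rep]
        refine ⟨p + (b⁻¹ * a) • k.rep, ⟨b⁻¹ * a, hne, rfl, by rw [hmk]; exact hk'K⟩, ?_⟩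
        rw [hhdef]
        simp only [dif_pos hne]
        exact hmk
    have hAinj : Set.InjOn h A := by
      rintro y ⟨c, hne, hyc, -⟩ y' ⟨c', hne', hyc', -⟩ hyy
      rw [hhdef] at hyy
      simp only [dif_pos hne, dif_pos hne'] at hyy
      rw [Projectivization.mk_eq_mk_iff' F _ _ hne hne'] at hyy
      obtain ⟨α, hα⟩ := hyy
      have hyxw : y - x = w + c • k.rep := by rw [hyc, hw]; abel
      have hyxw' : y' - x = w + c' • k.rep := by rw [hyc', hw]; abel
      have hα' : α • (w + c' • k.rep) = w + c • k.rep := by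
        rw [← hyxw, ← hyxw']; exact hα
      have heq : (α * c' - c) • k.rep + (α - 1) • w = 0 := by
        linear_combination (norm := module) hα'
      obtain ⟨h1, h2⟩ := li' _ _ heq
      have hα1 : α = 1 := sub_eq_zero.1 h2
      rw [hα1, one_mul] at h1
      have hcc : c' = c := sub_eq_zero.1 h1
      rw [hyc, hyc', hcc]
    -- conclude
    rw [hT, Set.ncard_image_of_injective A
        (fun a b hab => (congrArg Prod.fst hab : a = b)),
      ← Set.ncard_image_of_injOn hAinj, hAimg,
      Set.ncard_diff_singleton_of_mem hkKW, hKWd]
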